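/- Let G be a vertex-transitive simple graph containing a triangle. Then for every subset X of V(G), the number of trivial components of G − X is at most the number of edges of G with both ends in X. -/

import Mathlib

open SimpleGraph

section Defs

variable {V : Type*}

/-- A simple graph is vertex-transitive if any vertex can be mapped to any other
by a graph automorphism. -/
def VertexTransitive (G : SimpleGraph V) : Prop :=
  ∀ x y : V, ∃ φ : G ≃g G, φ x = y

/-- A graph is `p`-factor-critical if the removal of any set of `p` vertices
results in a graph with a perfect matching. -/
def PFactorCritical (G : SimpleGraph V) (p : ℕ) : Prop :=
  ∀ X : Set V, X.ncard = p → ∃ M : (G.induce Xᶜ).Subgraph, M.IsPerfectMatching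

/-- A graph is factor-critical if the removal of any single vertex results in a
graph with a perfect matching. -/
def IsFactorCritical {W : Type*} (H : SimpleGraph W) : Prop :=
  ∀ v : W, ∃ M : (H.induce ({v}ᶜ : Set W)).Subgraph, M.IsPerfectMatching

/-- `∇(X)`: the set of edges of `G` with exactly one end in `X`. -/
def edgeBoundary (G : SimpleGraph V) (X : Set V) : Set (Sym2 V) :=
  {e | e ∈ G.edgeSet ∧ ∃ x ∈ X, ∃ y ∈ Xᶜ, e = s(x, y)}

/-- The set of edges of `G` with both ends in `X`. -/
def edgesWithin (G : SimpleGraph V) (X : Set V) : Set (Sym2 V) :=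
  {e | e ∈ G.edgeSet ∧ ∀ v ∈ e, v ∈ X}

/-- The set of edges of `G` with one end in `A` and the other end in `S \ A`
(i.e. the edge boundary of `A` inside the induced subgraph `G[S]` when `A ⊆ S`). -/
def inducedEdgeBoundary (G : SimpleGraph V) (S A : Set V) : Set (Sym2 V) :=
  {e | e ∈ G.edgeSet ∧ ∃ x ∈ A, ∃ y ∈ S \ A, e = s(x, y)}

/-- `F` is an `s`-restricted edge-cut of `G` if deleting `F` disconnects `G` and
every component of `G − F` has at least `s` vertices. -/
def IsRestrictedEdgeCut (G : SimpleGraph V) (s : ℕ) (F : Set (Sym2 V)) : Prop :=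
  F ⊆ G.edgeSet ∧ ¬ (G.deleteEdges F).Connected ∧
    ∀ c : (G.deleteEdges F).ConnectedComponent, s ≤ c.supp.ncard

/-- `λ_s(G)`: the minimum cardinality of an `s`-restricted edge-cut of `G`. -/
noncomputable def lambdaS (G : SimpleGraph V) (s : ℕ) : ℕ :=
  sInf (Set.ncard '' {F | IsRestrictedEdgeCut G s F})

/-- A `λ_s`-fragment: a vertex set whose edge boundary is an `s`-restricted
edge-cut of minimum cardinality `λ_s(G)`. -/
def IsLambdaFragment (G : SimpleGraph V) (s : ℕ) (X : Set V) : Prop :=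
  IsRestrictedEdgeCut G s (edgeBoundary G X) ∧ (edgeBoundary G X).ncard = lambdaS G s

/-- A `λ_s`-atom: a `λ_s`-fragment of minimum cardinality. -/
def IsLambdaAtom (G : SimpleGraph V) (s : ℕ) (X : Set V) : Prop :=
  IsLambdaFragment G s X ∧ ∀ Y : Set V, IsLambdaFragment G s Y → X.ncard ≤ Y.ncard

/-- The odd girth of `G`: the length of a shortest odd cycle of `G`. -/
noncomputable def oddGirth (G : SimpleGraph V) : ℕ :=
  sInf {n | Odd n ∧ ∃ (v : V) (c : G.Walk v v), c.IsCycle ∧ c.length = n}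

/-- `X` is an independent set of `G`. -/
def IsIndependentSet (G : SimpleGraph V) (X : Set V) : Prop :=
  ∀ x ∈ X, ∀ y ∈ X, ¬ G.Adj x y

/-- The independence number `α(G)`. -/
noncomputable def indepNum (G : SimpleGraph V) : ℕ :=
  sSup {n | ∃ X : Set V, IsIndependentSet G X ∧ X.ncard = n}

/-- The number of trivial (single-vertex) components of `G − X`. -/
noncomputable def trivialComponentCount (G : SimpleGraph V) (X : Set V) : ℕ :=
  {c : (G.induce Xᶜ).ConnectedComponent | c.supp.ncard = 1}.ncard

/-- The number of odd components of `G − X`. -/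
noncomputable def oddComponentCount (G : SimpleGraph V) (X : Set V) : ℕ :=
  {c : (G.induce Xᶜ).ConnectedComponent | Odd c.supp.ncard}.ncard

/-- The number of nontrivial components of `G − X`. -/
noncomputable def nontrivialComponentCount (G : SimpleGraph V) (X : Set V) : ℕ :=
  {c : (G.induce Xᶜ).ConnectedComponent | 2 ≤ c.supp.ncard}.ncard

/-- An imprimitive block of `G`: a proper non-empty vertex set that every
automorphism either fixes setwise or maps to a disjoint set. -/
def IsImprimitiveBlock (G : SimpleGraph V) (X : Set V) : Prop :=
  X.Nonempty ∧ X ≠ Set.univ ∧ ∀ φ : G ≃g G, (⇑φ) '' X = X ∨ ((⇑φ) '' X) ∩ X = ∅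

/-- A connected graph is `q`-extendable if it has a perfect matching and every
matching of size `q` is contained in a perfect matching. -/
def Extendable (G : SimpleGraph V) (q : ℕ) : Prop :=
  (∃ M : G.Subgraph, M.IsPerfectMatching) ∧
    ∀ M : G.Subgraph, M.IsMatching → M.edgeSet.ncard = q →
      ∃ P : G.Subgraph, P.IsPerfectMatching ∧ M ≤ P

end Defs

open Finset


section Aux
variable {V : Type*} [Fintype V] [DecidableEq V]

open Classical in
/-- The set of "opposite edges" of triangles through `v`. -/
noncomputable def triAt (G : SimpleGraph V) (v : V) : Finset (Sym2 V) :=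
  Finset.univ.filter (fun e => e ∈ G.edgeSet ∧ ∀ w ∈ e, G.Adj v w)

lemma mem_triAt {G : SimpleGraph V} {v : V} {e : Sym2 V} :
    e ∈ triAt G v ↔ e ∈ G.edgeSet ∧ ∀ w ∈ e, G.Adj v w := by
  simp [triAt]

lemma triAt_card_eq (G : SimpleGraph V) (φ : G ≃g G) (v : V) :
    (triAt G v).card = (triAt G (φ v)).card := by
  apply Finset.card_bij (fun e _ => Sym2.map φ e)
  · intro e he
    rw [mem_triAt] at he ⊢
    obtain ⟨h1, h2⟩ := he
    constructor
    · induction e using Sym2.inductionOn with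
      | hf a b => simpa using φ.map_adj_iff.2 h1
    · intro w hw
      rw [Sym2.mem_map] at hw
      obtain ⟨u, hu, rfl⟩ := hw
      exact φ.map_adj_iff.2 (h2 u hu)
  · intro e he e' he' h
    exact Sym2.map.injective φ.injective h
  · intro e he
    refine ⟨Sym2.map φ.symm e, ?_, ?_⟩
    · rw [mem_triAt] at he ⊢
      obtain ⟨h1, h2⟩ := he
      constructor
      · induction e using Sym2.inductionOn with
        | hf a b =>
          simp only [Sym2.map_pair_eq, mem_edgeSet] at h1 ⊢
          exact φ.symm.map_adj_iff.2 h1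
      · intro w hw
        rw [Sym2.mem_map] at hw
        obtain ⟨u, hu, rfl⟩ := hw
        have := h2 u hu
        have : G.Adj (φ.symm (φ v)) (φ.symm u) := φ.symm.map_adj_iff.2 this
        simpa using this
    · induction e using Sym2.inductionOn with
      | hf a b => simp [Sym2.map_pair_eq]

lemma triAt_card_const {G : SimpleGraph V} (hvt : VertexTransitive G) (v w : V) :
    (triAt G v).card = (triAt G w).card := by
  obtain ⟨φ, hφ⟩ := hvt v w
  simpa [hφ] using triAt_card_eq G φ v

end Aux

/-- In a vertex-transitive graph containing a triangle, the
number of trivial components of `G − X` is at most the number of edges with both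
ends in `X`, for every vertex set `X`. -/
theorem statement5 {V : Type*} [Fintype V] [DecidableEq V]
    (G : SimpleGraph V)
    (hvt : VertexTransitive G) (htri : ¬ G.CliqueFree 3)
    (X : Set V) :
    trivialComponentCount G X ≤ (edgesWithin G X).ncard := by
  classical
  -- a vertex in a triangle
  obtain ⟨s, hs⟩ : ∃ s, G.IsNClique 3 s := by
    simpa [SimpleGraph.CliqueFree, not_forall] using htri
  rw [SimpleGraph.is3Clique_iff] at hs
  obtain ⟨a0, b0, c0, hab, hac, hbc, -⟩ := hs
  set t := (triAt G a0).card with ht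
  have htconst : ∀ v : V, (triAt G v).card = t := fun v => triAt_card_const hvt v a0
  have htpos : 0 < t := by
    rw [ht, Finset.card_pos]
    refine ⟨s(b0, c0), mem_triAt.2 ⟨hbc, ?_⟩⟩
    intro w hw
    rw [Sym2.mem_iff] at hw
    rcases hw with rfl | rfl
    · exact hab
    · exact hac
  set Tfin : Finset V := Finset.univ.filter (fun v => v ∈ Xᶜ ∧ ∀ w, G.Adj v w → w ∈ X) with hTfin
  set EXfin : Finset (Sym2 V) :=
    Finset.univ.filter (fun e => e ∈ G.edgeSet ∧ ∀ v ∈ e, v ∈ X) with hEXfin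
  -- edgesWithin is EXfin
  have hEX : (edgesWithin G X).ncard = EXfin.card := by
    rw [← Set.ncard_coe_finset]
    congr 1
    ext e
    simp [edgesWithin, hEXfin]
  -- trivial components inject into Tfin
  have hT : trivialComponentCount G X ≤ Tfin.card := by
    rw [trivialComponentCount, ← Set.ncard_coe_finset]
    refine Set.ncard_le_ncard_of_injOn
      (fun c => ((c.exists_rep.choose : ↥Xᶜ) : V)) ?_ ?_ (Tfin : Set V).toFinite
    · intro c hc
      simp only [Set.mem_setOf_eq] at hc
      obtain ⟨w, hw⟩ := Set.ncard_eq_one.mp hc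
      have hrep : c.exists_rep.choose = w := by
        have h1 : (c.exists_rep.choose : ↥Xᶜ) ∈ c.supp := by
          rw [SimpleGraph.ConnectedComponent.mem_supp_iff]
          exact c.exists_rep.choose_spec
        rw [hw] at h1
        exact h1
      show ((c.exists_rep.choose : ↥Xᶜ) : V) ∈ (Tfin : Set V)
      rw [hrep]
      simp only [Finset.coe_filter, Set.mem_setOf_eq, Finset.mem_univ, true_and, hTfin]
      refine ⟨w.2, fun u hu => ?_⟩
      by_contra hu'
      have hadj : (G.induce Xᶜ).Adj w ⟨u, hu'⟩ := hu
      have : (⟨u, hu'⟩ : ↥Xᶜ) ∈ c.supp := by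
        rw [SimpleGraph.ConnectedComponent.mem_supp_iff, ← SimpleGraph.ConnectedComponent.eq.2 hadj.reachable]
        rw [← SimpleGraph.ConnectedComponent.mem_supp_iff, hw]
        rfl
      rw [hw] at this
      have : (⟨u, hu'⟩ : ↥Xᶜ) = w := this
      exact G.irrefl (by rw [← Subtype.ext_iff.mp this] at hu; exact hu)
    · intro c hc c' hc' hfe
      simp only [Set.mem_setOf_eq] at hc hc'
      obtain ⟨w, hw⟩ := Set.ncard_eq_one.mp hc
      obtain ⟨w', hw'⟩ := Set.ncard_eq_one.mp hc'
      have h1 : c.exists_rep.choose = w := by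
        have := (SimpleGraph.ConnectedComponent.mem_supp_iff c c.exists_rep.choose).mpr
          c.exists_rep.choose_spec
        rw [hw] at this; exact this
      have h1' : c'.exists_rep.choose = w' := by
        have := (SimpleGraph.ConnectedComponent.mem_supp_iff c' c'.exists_rep.choose).mpr
          c'.exists_rep.choose_spec
        rw [hw'] at this; exact this
      have : w = w' := Subtype.ext (by rw [← h1, ← h1']; exact hfe)
      rw [← c.exists_rep.choose_spec, ← c'.exists_rep.choose_spec, h1, h1', this]
  -- the double counting
  have key : Tfin.card * t ≤ EXfin.card * t := by
    calc Tfin.card * t = ∑ _v ∈ Tfin, t := by rw [Finset.sum_const, smul_eq_mul]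
    _ = ∑ v ∈ Tfin, (triAt G v).card := by
        exact Finset.sum_congr rfl fun v _ => (htconst v).symm
    _ = ∑ v ∈ Tfin, (EXfin.filter (fun e => e ∈ triAt G v)).card := by
        refine Finset.sum_congr rfl fun v hv => ?_
        rw [Finset.filter_mem_eq_inter, Finset.inter_eq_right.mpr]
        intro e he
        rw [mem_triAt] at he
        simp only [hTfin, Finset.mem_filter, Finset.mem_univ, true_and] at hv
        simp only [hEXfin, Finset.mem_filter, Finset.mem_univ, true_and]
        exact ⟨he.1, fun u hu => hv.2 u (he.2 u hu)⟩
    _ = ∑ v ∈ Tfin, ∑ e ∈ EXfin, (if e ∈ triAt G v then 1 else 0) := by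
        exact Finset.sum_congr rfl fun v _ => Finset.card_filter _ _
    _ = ∑ e ∈ EXfin, ∑ v ∈ Tfin, (if e ∈ triAt G v then 1 else 0) := Finset.sum_comm
    _ = ∑ e ∈ EXfin, (Tfin.filter (fun v => e ∈ triAt G v)).card := by
        exact Finset.sum_congr rfl fun e _ => (Finset.card_filter _ _).symm
    _ ≤ ∑ _e ∈ EXfin, t := by
        refine Finset.sum_le_sum fun e he => ?_
        simp only [hEXfin, Finset.mem_filter, Finset.mem_univ, true_and] at he
        obtain ⟨he1, -⟩ := he
        induction e using Sym2.inductionOn with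
        | hf a b =>
          have hadj : G.Adj a b := he1
          rw [← htconst a]
          refine Finset.card_le_card_of_injOn (fun v => s(v, b)) ?_ ?_
          · intro v hv
            simp only [Finset.mem_coe, Finset.mem_filter] at hv ⊢
            obtain ⟨-, hv2⟩ := hv
            rw [mem_triAt] at hv2 ⊢
            have hva : G.Adj v a := hv2.2 a (by simp)
            have hvb : G.Adj v b := hv2.2 b (by simp)
            refine ⟨hvb, ?_⟩
            intro w hw
            rw [Sym2.mem_iff] at hw
            rcases hw with rfl | rfl
            · exact hva.symm
            · exact hadj
          · intro v hv v' hv' hvv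
            rw [Sym2.eq_iff] at hvv
            rcases hvv with ⟨h, -⟩ | ⟨h1, h2⟩
            · exact h
            · rw [h1, ← h2]
    _ = EXfin.card * t := by rw [Finset.sum_const, smul_eq_mul]
  have : Tfin.card ≤ EXfin.card := Nat.le_of_mul_le_mul_right key htpos
  omega
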